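/- arXiv:1605.09616 — 2 statements merged into one kernel-verified Lean document; each statement's English description precedes it below -/
import Mathlib

section
/- Let ψ : ℝⁿ → [0,∞) be a radial locally integrable function viewed as an even function on ℝ, and fix y ∈ ℝ^{n-1}. If ∫_M^∞ ψ(r)/(1+r²) dr = ∞ for all large M, then the function x ↦ ψ(√(x² + |y|²)) on ℝ satisfies ∫_M^∞ ψ(√(x² + |y|²))/(1+x²) dx = ∞. -/
open MeasureTheory Set

theorem radial_slice_divergence (ψ : ℝ → ℝ) (hψ0 : ∀ r, 0 ≤ ψ r)
    (heven : ∀ r, ψ (-r) = ψ r) (hloc : LocallyIntegrable ψ volume) (b : ℝ)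
    (hdiv : ∀ M : ℝ, ¬ IntegrableOn (fun r => ψ r / (1 + r ^ 2)) (Set.Ioi M)) :
    ∀ M : ℝ, ¬ IntegrableOn
      (fun x => ψ (Real.sqrt (x ^ 2 + b ^ 2)) / (1 + x ^ 2)) (Set.Ioi M) := by
  intro M h
  set g : ℝ → ℝ := fun x => ψ (Real.sqrt (x ^ 2 + b ^ 2)) / (1 + x ^ 2) with hg
  set M₁ : ℝ := max M (|b| + 1) with hM₁def
  have hbM₁ : |b| < M₁ := lt_of_lt_of_le (by linarith) (le_max_right _ _)
  have hM₁pos : 0 < M₁ := lt_of_le_of_lt (abs_nonneg b) hbM₁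
  have h1 : IntegrableOn g (Ioi M₁) := h.mono_set (Ioi_subset_Ioi (le_max_left _ _))
  set R : ℝ := Real.sqrt (M₁ ^ 2 + b ^ 2) with hRdef
  have hR2 : R ^ 2 = M₁ ^ 2 + b ^ 2 := Real.sq_sqrt (by positivity)
  have hRpos : 0 < R := Real.sqrt_pos.mpr (by positivity)
  have hRb : b ^ 2 < R ^ 2 := by nlinarith
  set f : ℝ → ℝ := fun r => Real.sqrt (r ^ 2 - b ^ 2) with hfdef
  set f' : ℝ → ℝ := fun r => r / Real.sqrt (r ^ 2 - b ^ 2) with hf'def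
  have hkey : ∀ r ∈ Ioi R, 0 < r ∧ (0 : ℝ) < r ^ 2 - b ^ 2 := by
    intro r hr
    simp only [mem_Ioi] at hr
    exact ⟨lt_trans hRpos hr, by nlinarith⟩
  have hderiv : ∀ r ∈ Ioi R, HasDerivWithinAt f (f' r) (Ioi R) r := by
    intro r hr
    obtain ⟨hr0, hrb⟩ := hkey r hr
    have hu : HasDerivAt (fun r : ℝ => r ^ 2 - b ^ 2) (2 * r) r := by
      simpa using (hasDerivAt_pow 2 r).sub_const (b ^ 2)
    have := (Real.hasDerivAt_sqrt (ne_of_gt hrb)).comp r hu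
    have heq : 1 / (2 * Real.sqrt (r ^ 2 - b ^ 2)) * (2 * r) = f' r := by
      have hs : Real.sqrt (r ^ 2 - b ^ 2) ≠ 0 := ne_of_gt (Real.sqrt_pos.mpr hrb)
      field_simp [hf'def]
      simp only [hf'def]
      field_simp
    rw [heq] at this
    exact this.hasDerivWithinAt
  have hinj : InjOn f (Ioi R) := by
    apply StrictMonoOn.injOn
    intro r1 hr1 r2 hr2 h12
    obtain ⟨h10, h1b⟩ := hkey r1 hr1
    obtain ⟨h20, h2b⟩ := hkey r2 hr2
    exact Real.sqrt_lt_sqrt (le_of_lt h1b) (by nlinarith)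
  have himg : f '' Ioi R = Ioi M₁ := by
    ext x
    constructor
    · rintro ⟨r, hr, rfl⟩
      obtain ⟨hr0, hrb⟩ := hkey r hr
      simp only [mem_Ioi] at hr ⊢
      have : Real.sqrt (M₁ ^ 2) < Real.sqrt (r ^ 2 - b ^ 2) :=
        Real.sqrt_lt_sqrt (by positivity) (by nlinarith)
      rwa [Real.sqrt_sq hM₁pos.le] at this
    · intro hx
      simp only [mem_Ioi] at hx
      have hx0 : 0 < x := lt_trans hM₁pos hx
      refine ⟨Real.sqrt (x ^ 2 + b ^ 2), ?_, ?_⟩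
      · simp only [mem_Ioi, hRdef]
        exact Real.sqrt_lt_sqrt (by positivity) (by nlinarith)
      · have : Real.sqrt (x ^ 2 + b ^ 2) ^ 2 = x ^ 2 + b ^ 2 := Real.sq_sqrt (by positivity)
        simp only [hfdef, this]
        rw [show x ^ 2 + b ^ 2 - b ^ 2 = x ^ 2 by ring, Real.sqrt_sq hx0.le]
  have h2 : IntegrableOn (fun r => |f' r| • g (f r)) (Ioi R) := by
    rw [← integrableOn_image_iff_integrableOn_abs_deriv_smul measurableSet_Ioi hderiv hinj g]
    rwa [himg]
  apply hdiv R
  have hmeas : AEStronglyMeasurable (fun r : ℝ => ψ r / (1 + r ^ 2))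
      (volume.restrict (Ioi R)) := by
    have ha : AEMeasurable ψ (volume.restrict (Ioi R)) :=
      hloc.aestronglyMeasurable.restrict.aemeasurable
    have hb2 : AEMeasurable (fun r : ℝ => 1 + r ^ 2) (volume.restrict (Ioi R)) :=
      ((continuous_const.add (continuous_pow 2)).measurable).aemeasurable
    exact (ha.div hb2).aestronglyMeasurable
  apply Integrable.mono h2 hmeas
  · filter_upwards [ae_restrict_mem measurableSet_Ioi] with r hr
    obtain ⟨hr0, hrb⟩ := hkey r hr
    have hs : 0 < Real.sqrt (r ^ 2 - b ^ 2) := Real.sqrt_pos.mpr hrb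
    have hf2 : f r ^ 2 = r ^ 2 - b ^ 2 := Real.sq_sqrt hrb.le
    have hgf : g (f r) = ψ r / (1 + (r ^ 2 - b ^ 2)) := by
      simp only [hg, hf2]
      rw [show r ^ 2 - b ^ 2 + b ^ 2 = r ^ 2 by ring, Real.sqrt_sq hr0.le]
    have hf'1 : 1 ≤ f' r := by
      rw [hf'def]
      rw [le_div_iff₀ hs, one_mul]
      calc Real.sqrt (r ^ 2 - b ^ 2) ≤ Real.sqrt (r ^ 2) :=
            Real.sqrt_le_sqrt (by nlinarith)
        _ = r := Real.sqrt_sq hr0.le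
    have hden : (0 : ℝ) < 1 + (r ^ 2 - b ^ 2) := by linarith
    have hgfnn : 0 ≤ g (f r) := by rw [hgf]; exact div_nonneg (hψ0 r) hden.le
    rw [Real.norm_eq_abs, Real.norm_eq_abs, smul_eq_mul]
    rw [abs_of_nonneg (div_nonneg (hψ0 r) (by positivity))]
    rw [abs_of_nonneg (mul_nonneg (abs_nonneg _) hgfnn)]
    rw [abs_of_nonneg (le_trans zero_le_one hf'1), hgf]
    calc ψ r / (1 + r ^ 2) ≤ ψ r / (1 + (r ^ 2 - b ^ 2)) := by
          apply div_le_div_of_nonneg_left (hψ0 r) hden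
          nlinarith [sq_nonneg b]
      _ = 1 * (ψ r / (1 + (r ^ 2 - b ^ 2))) := (one_mul _).symm
      _ ≤ f' r * (ψ r / (1 + (r ^ 2 - b ^ 2))) :=
          mul_le_mul_of_nonneg_right hf'1 (div_nonneg (hψ0 r) hden.le)
end

section
/- Define F(x,y) = f(x)·P₁(y) on ℝ², where f ∈ L²(ℝ) is a nonzero function supported in {x ≤ x₀} with |f̂(u)| ≤ C e^{-|u|^{1/2}} for large |u| (such f exists by the Paley–Wiener theorem), and P₁(y) = (1/π)·1/(1+y²) is the Poisson kernel. Then F ∈ L²(ℝ²) is nonzero, supported in the half-plane {(x,y) : x ≤ x₀}, satisfies |F̂(u,v)| ≤ C e^{-ψ(u,v)} a.e. with ψ(u,v) = |u|^{1/2} + 2π|v|, and yet ∫_{ℝ²} ψ(u,v)/(1+|(u,v)|)³ du dv = ∞. -/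
open MeasureTheory Real Filter FourierTransform Set Topology

lemma aux_cexp_Ioi {c : ℂ} (hc : 0 < c.re) :
    ∫ x in Ioi (0:ℝ), Complex.exp (-(c * x)) = 1 / c := by
  have hc0 : c ≠ 0 := fun h => by simp [h] at hc
  have hint : IntegrableOn (fun x : ℝ => Complex.exp (-(c * x))) (Ioi 0) := by
    have h1 : IntegrableOn (fun x : ℝ => Real.exp (-c.re * x)) (Ioi 0) :=
      exp_neg_integrableOn_Ioi 0 hc
    refine (h1.mono' ?_ ?_)
    · exact (Complex.continuous_exp.comp (by continuity)).aestronglyMeasurable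
    · filter_upwards with x
      simp [Complex.norm_exp, neg_mul]
  have hderiv : ∀ x ∈ Ici (0:ℝ), HasDerivAt (fun x : ℝ => -c⁻¹ * Complex.exp (-(c * x)))
      (Complex.exp (-(c * x))) x := by
    intro x _
    have h0 : HasDerivAt (fun x : ℝ => -(c * (x:ℂ))) (-c) x := by
      simpa [Pi.neg_def] using ((Complex.ofRealCLM.hasDerivAt (x := x)).const_mul c).neg
    have h1 := h0.cexp
    have := h1.const_mul (-c⁻¹)
    convert this using 1
    · rfl
    field_simp
  have htend : Tendsto (fun x : ℝ => -c⁻¹ * Complex.exp (-(c * x))) atTop (𝓝 (0:ℂ)) := by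
    rw [show (0:ℂ) = -c⁻¹ * 0 by ring]
    refine Tendsto.const_mul _ ?_
    rw [tendsto_zero_iff_norm_tendsto_zero]
    have : ∀ x : ℝ, ‖Complex.exp (-(c * x))‖ = Real.exp (-c.re * x) := by
      intro x; simp [Complex.norm_exp, neg_mul]
    simp_rw [this]
    exact Real.tendsto_exp_atBot.comp (tendsto_id.const_mul_atTop_of_neg (neg_neg_iff_pos.2 hc))
  have := integral_Ioi_of_hasDerivAt_of_tendsto' hderiv hint htend
  rw [this]; simp

lemma aux_exp_abs_integrableOn_Iic {a : ℝ} (ha : 0 < a) (g : ℝ → ℂ)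
    (hg : ∀ x, ‖g x‖ = Real.exp (-(a * |x|))) (hm : AEStronglyMeasurable g volume) :
    Integrable g := by
  have hIoi : ∀ (h : ℝ → ℂ), AEStronglyMeasurable h volume → (∀ x, ‖h x‖ = Real.exp (-(a * |x|)))
      → IntegrableOn h (Ioi 0) := by
    intro h hm' hh
    refine ((exp_neg_integrableOn_Ioi 0 ha).mono' hm'.restrict ?_)
    filter_upwards [ae_restrict_mem measurableSet_Ioi] with x hx
    rw [hh x, abs_of_pos hx, neg_mul]
  have h1 : IntegrableOn g (Ioi 0) := hIoi g hm hg
  have h2 : IntegrableOn g (Iic 0) := by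
    rw [← (Measure.measurePreserving_neg (volume : Measure ℝ)).integrableOn_comp_preimage
        (Homeomorph.neg ℝ).measurableEmbedding]
    simp only [Function.comp_def, neg_preimage, neg_Iic, neg_zero]
    rw [integrableOn_Ici_iff_integrableOn_Ioi]
    exact hIoi (fun x => g (-x)) (hm.comp_quasiMeasurePreserving
      (quasiMeasurePreserving_neg volume)) (fun x => by rw [hg, abs_neg])
  have := h2.union h1
  rwa [Iic_union_Ioi, integrableOn_univ] at this

noncomputable def gKer : ℝ → ℂ := fun x => (Real.exp (-(2 * π * |x|)) : ℂ)

lemma gKer_norm (x : ℝ) : ‖gKer x‖ = Real.exp (-(2 * π * |x|)) := by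
  simp [gKer, Complex.norm_exp]

lemma gKer_integrable : Integrable gKer := by
  refine aux_exp_abs_integrableOn_Iic (a := 2 * π) (by positivity) _ gKer_norm ?_
  exact (Complex.continuous_ofReal.comp (by continuity)).aestronglyMeasurable

lemma fourier_gKer (w : ℝ) : 𝓕 gKer w = ((1 / (π * (1 + w ^ 2)) : ℝ) : ℂ) := by
  rw [Real.fourier_real_eq_integral_exp_smul]
  have hmeas : ∀ w : ℝ, AEStronglyMeasurable
      (fun x : ℝ => Complex.exp (↑(-2 * π * x * w) * Complex.I) • gKer x) volume := by
    intro w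
    refine AEStronglyMeasurable.smul (f := fun x : ℝ => Complex.exp (↑(-2 * π * x * w) * Complex.I)) ?_ gKer_integrable.aestronglyMeasurable
    apply Continuous.aestronglyMeasurable
    exact Complex.continuous_exp.comp (by continuity)
  have hInt : Integrable (fun x : ℝ => Complex.exp (↑(-2 * π * x * w) * Complex.I) • gKer x) := by
    refine aux_exp_abs_integrableOn_Iic (a := 2 * π) (by positivity) _ ?_ (hmeas w)
    intro x
    rw [norm_smul, gKer_norm]
    simp [Complex.norm_exp]
  -- split the integral
  rw [← intervalIntegral.integral_Iic_add_Ioi (b := (0:ℝ)) hInt.integrableOn hInt.integrableOn]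
  have hIoi : (∫ x in Ioi (0:ℝ), Complex.exp (↑(-2 * π * x * w) * Complex.I) • gKer x)
      = 1 / (2 * π * (1 + w * Complex.I)) := by
    rw [← aux_cexp_Ioi (c := 2 * π * (1 + w * Complex.I)) (by simp [Complex.add_re]; positivity)]
    refine setIntegral_congr_fun measurableSet_Ioi (fun x hx => ?_)
    rw [smul_eq_mul]
    simp only [gKer]
    rw [abs_of_pos hx, Complex.ofReal_exp, ← Complex.exp_add]
    congr 1
    push_cast
    ring
  have hIic : (∫ x in Iic (0:ℝ), Complex.exp (↑(-2 * π * x * w) * Complex.I) • gKer x)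
      = 1 / (2 * π * (1 - w * Complex.I)) := by
    have h0 : (∫ x in Iic (0:ℝ), Complex.exp (↑(-2 * π * x * w) * Complex.I) • gKer x)
        = ∫ x in Iic (0:ℝ), (fun y => Complex.exp (↑(-2 * π * (-y) * w) * Complex.I) • gKer (-y)) (-x) := by
      refine setIntegral_congr_fun measurableSet_Iic (fun x _ => ?_)
      simp only [neg_neg]
    rw [h0, integral_comp_neg_Iic (0:ℝ)
      (fun y => Complex.exp (↑(-2 * π * -y * w) * Complex.I) • gKer (-y)), neg_zero,
      ← aux_cexp_Ioi (c := 2 * π * (1 - w * Complex.I)) (by simp [Complex.sub_re]; positivity)]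
    refine setIntegral_congr_fun measurableSet_Ioi (fun x hx => ?_)
    simp only [smul_eq_mul, gKer]
    rw [abs_neg, abs_of_pos hx, Complex.ofReal_exp, ← Complex.exp_add]
    congr 1
    push_cast
    ring
  rw [hIoi, hIic]
  have h1 : (1 + w * Complex.I) ≠ 0 := fun h => by simpa using congrArg Complex.re h
  have h2 : (1 - w * Complex.I) ≠ 0 := fun h => by simpa using congrArg Complex.re h
  have h3 : (1 + (w:ℂ) ^ 2) ≠ 0 := by
    have : (1 - w * Complex.I) * (1 + w * Complex.I) = 1 + w ^ 2 := by
      have := Complex.I_sq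
      ring_nf
      rw [Complex.I_sq]
      ring
    rw [← this]
    exact mul_ne_zero h2 h1
  have hπ : (π:ℂ) ≠ 0 := Complex.ofReal_ne_zero.2 pi_ne_zero
  push_cast
  field_simp
  ring_nf
  rw [Complex.I_sq]
  ring

noncomputable def PKer : ℝ → ℂ := fun y => ((1 / (π * (1 + y ^ 2)) : ℝ) : ℂ)

lemma PKer_integrable : Integrable PKer := by
  have : Integrable (fun y : ℝ => (1 / (π * (1 + y ^ 2)) : ℝ)) := by
    have h := integrable_inv_one_add_sq.const_mul (1 / π)
    refine h.congr (Filter.Eventually.of_forall fun y => ?_)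
    field_simp
  exact this.ofReal

lemma PKer_cont : Continuous PKer := by
  apply Complex.continuous_ofReal.comp
  apply Continuous.div continuous_const
  · continuity
  · intro y
    have : (0:ℝ) < 1 + y ^ 2 := by positivity
    positivity

lemma fourier_PKer (v : ℝ) : 𝓕 PKer v = gKer v := by
  have hP : PKer = 𝓕 gKer := by
    ext w; rw [fourier_gKer]; rfl
  have hinv := Continuous.fourierInv_fourier_eq (f := gKer) (by unfold gKer; continuity)
    gKer_integrable (by rw [← hP]; exact PKer_integrable)
  calc 𝓕 PKer v = 𝓕 (𝓕 gKer) v := by rw [hP]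
    _ = 𝓕⁻ (𝓕 gKer) (-v) := by rw [Real.fourierInv_eq_fourier_neg, neg_neg]
    _ = gKer (-v) := by rw [hinv]
    _ = gKer v := by unfold gKer; rw [abs_neg]

lemma norm_fourier_PKer (v : ℝ) : ‖𝓕 PKer v‖ = Real.exp (-(2 * π * |v|)) := by
  rw [fourier_PKer, gKer_norm]

noncomputable def eqv : EuclideanSpace ℝ (Fin 2) ≃ᵐ ℝ × ℝ :=
  (MeasurableEquiv.toLp 2 (Fin 2 → ℝ)).symm.trans (MeasurableEquiv.finTwoArrow)

lemma eqv_mp : MeasurePreserving eqv volume volume :=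
  (volume_preserving_finTwoArrow ℝ).comp (EuclideanSpace.volume_preserving_symm_measurableEquiv_toLp (Fin 2))


lemma fourier_factor (g : ℝ → ℂ) (p : EuclideanSpace ℝ (Fin 2)) :
    𝓕 ((fun z : ℝ × ℝ => g z.1 * PKer z.2) ∘ eqv) p = 𝓕 g (p 0) * 𝓕 PKer (p 1) := by
  calc 𝓕 ((fun z : ℝ × ℝ => g z.1 * PKer z.2) ∘ eqv) p
      = ∫ z : ℝ × ℝ, 𝐞 (-(inner ℝ (eqv.symm z) p : ℝ)) •
          ((fun z : ℝ × ℝ => g z.1 * PKer z.2) ∘ eqv) (eqv.symm z) := by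
        rw [Real.fourier_eq,
          ← (eqv_mp.symm eqv).integral_comp eqv.symm.measurableEmbedding]
    _ = ∫ z : ℝ × ℝ, (𝐞 (-(z.1 * p 0)) • g z.1) * (𝐞 (-(z.2 * p 1)) • PKer z.2) := by
        congr 1; funext z
        have hinner : (inner ℝ (eqv.symm z) p : ℝ) = z.1 * p 0 + z.2 * p 1 := by
          simp [PiLp.inner_apply, Fin.sum_univ_two]
          rw [mul_comm (p 0), mul_comm (p 1)]; rfl
        have hGz : ((fun z : ℝ × ℝ => g z.1 * PKer z.2) ∘ eqv) (eqv.symm z)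
            = g z.1 * PKer z.2 := by
          simp
        rw [hinner, hGz, neg_add, AddChar.map_add_eq_mul]
        rw [Circle.smul_def, Circle.smul_def, Circle.smul_def, Circle.coe_mul]
        simp only [smul_eq_mul]
        ring
    _ = (∫ x : ℝ, 𝐞 (-(x * p 0)) • g x) * (∫ y : ℝ, 𝐞 (-(y * p 1)) • PKer y) := by
        rw [Measure.volume_eq_prod, integral_prod_mul (f := fun x : ℝ => 𝐞 (-(x * p 0)) • g x)
          (g := fun y : ℝ => 𝐞 (-(y * p 1)) • PKer y)]
    _ = 𝓕 g (p 0) * 𝓕 PKer (p 1) := by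
        rw [Real.fourier_real_eq, Real.fourier_real_eq]


theorem nonradial_counterexample (f : ℝ → ℂ) (hf2 : MemLp f 2 volume)
    (hfne : ¬ f =ᵐ[volume] (0 : ℝ → ℂ))
    (x₀ : ℝ) (hsupp : ∀ x, f x ≠ 0 → x ≤ x₀)
    (C R : ℝ) (hb : ∀ u : ℝ, R ≤ |u| → ‖𝓕 f u‖ ≤ C * Real.exp (-Real.sqrt |u|)) :
    ∀ F : EuclideanSpace ℝ (Fin 2) → ℂ,
      (∀ p, F p = f (p 0) * ((1 / (π * (1 + (p 1) ^ 2)) : ℝ) : ℂ)) →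
      MemLp F 2 volume ∧ ¬ F =ᵐ[volume] 0 ∧ (∀ p, F p ≠ 0 → p 0 ≤ x₀) ∧
      (∃ C' : ℝ, ∀ᵐ p : EuclideanSpace ℝ (Fin 2) ∂volume,
        ‖𝓕 F p‖ ≤ C' * Real.exp (-(Real.sqrt |p 0| + 2 * π * |p 1|))) ∧
      ¬ Integrable (fun p : EuclideanSpace ℝ (Fin 2) =>
        (Real.sqrt |p 0| + 2 * π * |p 1|) / (1 + ‖p‖) ^ 3) := by
  intro F hF
  have hFeq : F = (fun z : ℝ × ℝ => f z.1 * PKer z.2) ∘ eqv := by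
    funext x; rw [hF]; rfl
  refine ⟨?_, ?_, ?_, ?_, ?_⟩
  · -- Memℒp
    have hGm : AEStronglyMeasurable (fun z : ℝ × ℝ => f z.1 * PKer z.2)
        (volume : Measure (ℝ × ℝ)) := by
      rw [Measure.volume_eq_prod]
      exact (hf2.aestronglyMeasurable.comp_quasiMeasurePreserving
        Measure.quasiMeasurePreserving_fst).mul
        ((PKer_cont.comp continuous_snd).aestronglyMeasurable)
    have hfsq : Integrable (fun x : ℝ => ‖f x‖ ^ 2) volume :=
      (memLp_two_iff_integrable_sq_norm hf2.aestronglyMeasurable).1 hf2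
    have hPsq : Integrable (fun y : ℝ => ‖PKer y‖ ^ 2) volume := by
      refine (integrable_inv_one_add_sq.const_mul (1 / π ^ 2)).mono'
        ((PKer_cont.norm.pow 2).aestronglyMeasurable) ?_
      filter_upwards with y
      have h1 : (0:ℝ) < 1 + y ^ 2 := by positivity
      have h2 : (1:ℝ) ≤ 1 + y ^ 2 := by nlinarith [sq_nonneg y]
      have hnorm : ‖PKer y‖ = 1 / (π * (1 + y ^ 2)) := by
        simp only [PKer, Complex.norm_real, Real.norm_eq_abs]
        rw [abs_of_pos (by positivity)]
      rw [Real.norm_eq_abs, abs_of_nonneg (by positivity), hnorm]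
      calc (1 / (π * (1 + y ^ 2))) ^ 2 = 1 / (π ^ 2 * (1 + y ^ 2) ^ 2) := by
            rw [div_pow, one_pow, mul_pow]
        _ ≤ 1 / (π ^ 2 * (1 + y ^ 2)) := by
            gcongr
            nlinarith
        _ = 1 / π ^ 2 * (1 + y ^ 2)⁻¹ := by
            rw [one_div, mul_inv, ← one_div]
    have hGsq : Integrable (fun z : ℝ × ℝ => ‖f z.1 * PKer z.2‖ ^ 2)
        (volume : Measure (ℝ × ℝ)) := by
      rw [Measure.volume_eq_prod]
      refine (hfsq.mul_prod hPsq).congr (Filter.Eventually.of_forall fun z => ?_)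
      simp only [norm_mul, mul_pow]
    have hG2 : MemLp (fun z : ℝ × ℝ => f z.1 * PKer z.2) 2 (volume : Measure (ℝ × ℝ)) :=
      (memLp_two_iff_integrable_sq_norm hGm).2 hGsq
    rw [hFeq]
    refine ⟨hGm.comp_quasiMeasurePreserving eqv_mp.quasiMeasurePreserving, ?_⟩
    rw [eLpNorm_comp_measurePreserving hGm eqv_mp]
    exact hG2.2
  · -- nonzero
    intro h
    apply hfne
    have h1 : ∀ᵐ z : ℝ × ℝ ∂(volume : Measure (ℝ × ℝ)), f z.1 * PKer z.2 = 0 := by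
      have h2 : ∀ᵐ x : EuclideanSpace ℝ (Fin 2) ∂volume, (fun z : ℝ × ℝ => f z.1 * PKer z.2) (eqv x) = 0 := by
        filter_upwards [h] with x hx
        rw [hFeq] at hx
        exact hx
      have h3 := (eqv.measurableEmbedding.ae_map_iff
        (p := fun z : ℝ × ℝ => f z.1 * PKer z.2 = 0)).2 h2
      rwa [eqv_mp.map_eq] at h3
    rw [Measure.volume_eq_prod] at h1
    have h4 := Measure.ae_ae_of_ae_prod h1
    filter_upwards [h4] with x hx
    obtain ⟨y, hy⟩ := hx.exists
    have hPy : PKer y ≠ 0 := by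
      simp only [PKer, ne_eq, Complex.ofReal_eq_zero]
      positivity
    simpa [hPy] using hy
  · -- support
    intro p hp
    exact hsupp _ (fun h0 => hp (by rw [hF, h0, zero_mul]))
  · -- Fourier bound
    set M : ℝ := ∫ x : ℝ, ‖f x‖ with hMdef
    have hM0 : 0 ≤ M := integral_nonneg (fun x => norm_nonneg _)
    have hM : ∀ u : ℝ, ‖𝓕 f u‖ ≤ M := by
      intro u
      rw [Real.fourier_real_eq]
      refine (norm_integral_le_integral_norm _).trans_eq ?_
      congr 1; funext v
      simp [Circle.smul_def, Circle.norm_coe]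
    set C' : ℝ := max C (M * Real.exp (Real.sqrt |R|)) with hC'def
    have hC'0 : 0 ≤ C' := le_trans (by positivity) (le_max_right _ _)
    have hC' : ∀ u : ℝ, ‖𝓕 f u‖ ≤ C' * Real.exp (-Real.sqrt |u|) := by
      intro u
      rcases le_or_gt R |u| with h | h
      · exact (hb u h).trans (mul_le_mul_of_nonneg_right (le_max_left _ _) (Real.exp_pos _).le)
      · calc ‖𝓕 f u‖ ≤ M := hM u
          _ = M * Real.exp (Real.sqrt |R|) * Real.exp (-Real.sqrt |R|) := by
              rw [mul_assoc, ← Real.exp_add]; simp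
          _ ≤ C' * Real.exp (-Real.sqrt |u|) := by
              refine mul_le_mul (le_max_right _ _) ?_ (Real.exp_pos _).le hC'0
              exact Real.exp_le_exp.2 (neg_le_neg (Real.sqrt_le_sqrt
                (le_trans h.le (le_abs_self R))))
    refine ⟨C', Filter.Eventually.of_forall fun p => ?_⟩
    rw [hFeq, fourier_factor, norm_mul, norm_fourier_PKer]
    calc ‖𝓕 f (p 0)‖ * Real.exp (-(2 * π * |p 1|))
        ≤ C' * Real.exp (-Real.sqrt |p 0|) * Real.exp (-(2 * π * |p 1|)) :=
          mul_le_mul_of_nonneg_right (hC' _) (Real.exp_pos _).le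
      _ = C' * Real.exp (-(Real.sqrt |p 0| + 2 * π * |p 1|)) := by
          rw [mul_assoc, ← Real.exp_add]; ring_nf
  · -- non-integrability
    intro h
    set Φ' : ℝ × ℝ → ℝ := fun z =>
      (Real.sqrt |z.1| + 2 * π * |z.2|) / (1 + ‖eqv.symm z‖) ^ 3 with hΦ'def
    have h' : Integrable Φ' (volume : Measure (ℝ × ℝ)) := by
      have := ((eqv_mp.symm eqv).integrable_comp_emb eqv.symm.measurableEmbedding).2 h
      exact this
    rw [Measure.volume_eq_prod] at h'
    have hFub := h'.integral_norm_prod_left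
    have hae := h'.prod_right_ae
    have hnn : ∀ z : ℝ × ℝ, 0 ≤ Φ' z := by
      intro z
      apply div_nonneg (by positivity)
      positivity
    have key : ∀ x : ℝ, 1 ≤ |x| → Integrable (fun y => Φ' (x, y)) volume →
        (π / 27) * |x|⁻¹ ≤ ∫ y : ℝ, ‖Φ' (x, y)‖ := by
      intro x hx hint
      have hx0 : (0:ℝ) < |x| := lt_of_lt_of_le one_pos hx
      have hstep1 : ∫ y in Ioc (0:ℝ) |x|, Φ' (x, y) ≤ ∫ y : ℝ, ‖Φ' (x, y)‖ := by
        have : (fun y => ‖Φ' (x, y)‖) = fun y => Φ' (x, y) := by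
          funext y; rw [Real.norm_eq_abs, abs_of_nonneg (hnn _)]
        rw [this]
        exact setIntegral_le_integral hint (Filter.Eventually.of_forall fun y => hnn _)
      have hstep2 : ∫ y in Ioc (0:ℝ) |x|, (2 * π * y) / (27 * |x| ^ 3)
          ≤ ∫ y in Ioc (0:ℝ) |x|, Φ' (x, y) := by
        refine setIntegral_mono_on ?_ hint.integrableOn measurableSet_Ioc ?_
        · exact (Continuous.integrableOn_Ioc (by continuity))
        · intro y hy
          obtain ⟨hy0, hy1⟩ := hy
          have hnorm : ‖eqv.symm (x, y)‖ ≤ |x| + |y| := by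
            rw [EuclideanSpace.norm_eq]
            have h1 : (∑ i : Fin 2, ‖(eqv.symm (x, y)) i‖ ^ 2) = |x| ^ 2 + |y| ^ 2 := by
              rw [Fin.sum_univ_two]
              norm_num [Real.norm_eq_abs]
              rfl
            rw [h1]
            have h2 : |x| ^ 2 + |y| ^ 2 ≤ (|x| + |y|) ^ 2 := by
              nlinarith [abs_nonneg x, abs_nonneg y]
            calc Real.sqrt (|x| ^ 2 + |y| ^ 2) ≤ Real.sqrt ((|x| + |y|) ^ 2) :=
                  Real.sqrt_le_sqrt h2
              _ = |x| + |y| := Real.sqrt_sq (by positivity)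
          have hden : (1 + ‖eqv.symm (x, y)‖) ^ 3 ≤ 27 * |x| ^ 3 := by
            have h3 : 1 + ‖eqv.symm (x, y)‖ ≤ 3 * |x| := by
              have : |y| ≤ |x| := by rw [abs_of_pos hy0]; exact hy1
              linarith [hnorm]
            calc (1 + ‖eqv.symm (x, y)‖) ^ 3 ≤ (3 * |x|) ^ 3 := by
                  refine pow_le_pow_left₀ ?_ h3 3
                  positivity
              _ = 27 * |x| ^ 3 := by ring
          refine div_le_div₀ (by positivity) ?_ (by positivity) hden
          rw [abs_of_pos hy0]
          nlinarith [Real.sqrt_nonneg |x|]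
      have hstep3 : ∫ y in Ioc (0:ℝ) |x|, (2 * π * y) / (27 * |x| ^ 3)
          = (π / 27) * |x|⁻¹ := by
        have hid : ∫ y in Ioc (0:ℝ) |x|, y = |x| ^ 2 / 2 := by
          rw [← intervalIntegral.integral_of_le hx0.le, integral_id]
          ring
        have : (fun y : ℝ => (2 * π * y) / (27 * |x| ^ 3))
            = fun y : ℝ => (2 * π / (27 * |x| ^ 3)) * y := by
          funext y; ring
        rw [this, integral_const_mul, hid]
        field_simp
      linarith [hstep1, hstep2, hstep3.symm.le]
    have hIntOn : IntegrableOn (fun x : ℝ => (π / 27) * x⁻¹) (Ioi 1) volume := by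
      refine Integrable.mono' hFub.integrableOn ?_ ?_
      · exact ((measurable_id.inv.const_mul (π / 27)).aestronglyMeasurable).restrict
      · filter_upwards [ae_restrict_mem measurableSet_Ioi, ae_restrict_of_ae hae]
          with x hx1 hx2
        have hx0 : (0:ℝ) < x := lt_trans one_pos hx1
        have habs : |x| = x := abs_of_pos hx0
        rw [Real.norm_eq_abs, abs_of_nonneg (by positivity)]
        have := key x (by rw [habs]; exact hx1.le) hx2
        rwa [habs] at this
    have hIntOn2 : IntegrableOn (fun x : ℝ => x ^ (-1 : ℝ)) (Ioi 1) volume := by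
      have h27 : (27 / π) * (π / 27) = (1:ℝ) := by
        field_simp
      refine (hIntOn.const_mul (27 / π)).congr (ae_restrict_of_ae ?_)
      filter_upwards with x
      rw [Real.rpow_neg_one, ← mul_assoc, h27, one_mul]
    have := (integrableOn_Ioi_rpow_iff one_pos).1 hIntOn2
    linarith
end
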